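/- For every pair of integers (n,p) and every continuously differentiable function φ : [−1,1] → ℝ with φ(−1) = φ(1) = 0, one has ∫_{−1}^{1} (φ'(x)² + (px+n)² φ(x)²) dx ≥ (1/4)(|p|+1) ∫_{−1}^{1} φ(x)² dx; moreover, if in addition |n| ≥ 2|p|, then ∫_{−1}^{1} (φ'(x)² + (px+n)² φ(x)²) dx ≥ (n²/4) ∫_{−1}^{1} φ(x)² dx. -/

import Mathlib

open MeasureTheory Real Set

private lemma hdskey (φ : ℝ → ℝ) (hφ : ContDiff ℝ 1 φ)
    (hb1 : φ (-1) = 0) (hb2 : φ 1 = 0) (c d : ℝ) :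
    c * ∫ x in (-1:ℝ)..1, φ x ^ 2 ≤
      (∫ x in (-1:ℝ)..1, deriv φ x ^ 2) + ∫ x in (-1:ℝ)..1, (c * x + d) ^ 2 * φ x ^ 2 := by
  have hφc : Continuous φ := hφ.continuous
  have hdc : Continuous (deriv φ) := hφ.continuous_deriv le_rfl
  have hdiff : Differentiable ℝ φ := hφ.differentiable one_ne_zero
  have i1 : IntervalIntegrable (fun x => deriv φ x ^ 2) volume (-1) 1 :=
    (hdc.pow 2).intervalIntegrable _ _
  have i2 : IntervalIntegrable (fun x => (c * x + d) * (2 * φ x * deriv φ x)) volume (-1) 1 :=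
    (((continuous_const.mul continuous_id').add continuous_const).mul
      ((continuous_const.mul hφc).mul hdc)).intervalIntegrable _ _
  have i3 : IntervalIntegrable (fun x => (c * x + d) ^ 2 * φ x ^ 2) volume (-1) 1 :=
    ((((continuous_const.mul continuous_id').add continuous_const).pow 2).mul
      (hφc.pow 2)).intervalIntegrable _ _
  have i0 : IntervalIntegrable (fun x => c * φ x ^ 2) volume (-1) 1 :=
    (continuous_const.mul (hφc.pow 2)).intervalIntegrable _ _
  -- nonnegativity of the square
  have h0 : (0:ℝ) ≤ ∫ x in (-1:ℝ)..1, (deriv φ x + (c * x + d) * φ x) ^ 2 :=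
    intervalIntegral.integral_nonneg (by norm_num) (fun x _ => sq_nonneg _)
  -- expansion
  have hexp : (∫ x in (-1:ℝ)..1, (deriv φ x + (c * x + d) * φ x) ^ 2)
      = (∫ x in (-1:ℝ)..1, deriv φ x ^ 2)
        + ((∫ x in (-1:ℝ)..1, (c * x + d) * (2 * φ x * deriv φ x))
          + ∫ x in (-1:ℝ)..1, (c * x + d) ^ 2 * φ x ^ 2) := by
    rw [← intervalIntegral.integral_add i2 i3, ← intervalIntegral.integral_add i1 (i2.add i3)]
    congr 1
    funext x
    ring
  -- integration by parts
  have hparts : (∫ x in (-1:ℝ)..1, (c * φ x ^ 2 + (c * x + d) * (2 * φ x * deriv φ x)))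
      = (c * 1 + d) * φ 1 ^ 2 - (c * (-1) + d) * φ (-1) ^ 2 := by
    apply intervalIntegral.integral_deriv_mul_eq_sub
      (u := fun x => c * x + d) (v := fun x => φ x ^ 2)
      (u' := fun _ => c) (v' := fun x => 2 * φ x * deriv φ x)
    · intro x _
      simpa using ((hasDerivAt_id x).const_mul c).add_const d
    · intro x _
      have h := (hdiff x).hasDerivAt.fun_pow 2
      simpa [mul_comm, mul_assoc, mul_left_comm] using h
    · exact continuous_const.intervalIntegrable _ _
    · exact ((continuous_const.mul hφc).mul hdc).intervalIntegrable _ _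
  rw [intervalIntegral.integral_add i0 i2, hb1, hb2] at hparts
  rw [intervalIntegral.integral_const_mul] at hparts
  norm_num at hparts
  have hparts' : (∫ x in (-1:ℝ)..1, (c * x + d) * (2 * φ x * deriv φ x))
      = -(c * ∫ x in (-1:ℝ)..1, φ x ^ 2) := by
    linarith [hparts]
  rw [hexp, hparts'] at h0
  linarith

/-- lower bounds for the variational first Dirichlet eigenvalue of
`-d²/dx² + (px+n)²` on `(-1,1)`. -/
theorem heisenberg_dissipation_speed (n p : ℤ) (φ : ℝ → ℝ) (hφ : ContDiff ℝ 1 φ)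
    (hb1 : φ (-1) = 0) (hb2 : φ 1 = 0) :
    (1 / 4 * (|(p : ℝ)| + 1) * ∫ x in (-1:ℝ)..1, φ x ^ 2)
      ≤ (∫ x in (-1:ℝ)..1, (deriv φ x ^ 2 + ((p : ℝ) * x + (n : ℝ)) ^ 2 * φ x ^ 2)) ∧
    (2 * |(p : ℝ)| ≤ |(n : ℝ)| →
      ((n : ℝ) ^ 2 / 4 * ∫ x in (-1:ℝ)..1, φ x ^ 2)
        ≤ ∫ x in (-1:ℝ)..1, (deriv φ x ^ 2 + ((p : ℝ) * x + (n : ℝ)) ^ 2 * φ x ^ 2)) := by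
  have hφc : Continuous φ := hφ.continuous
  have hdc : Continuous (deriv φ) := hφ.continuous_deriv le_rfl
  have i1 : IntervalIntegrable (fun x => deriv φ x ^ 2) volume (-1) 1 :=
    (hdc.pow 2).intervalIntegrable _ _
  have i3 : IntervalIntegrable (fun x => ((p:ℝ) * x + (n:ℝ)) ^ 2 * φ x ^ 2) volume (-1) 1 :=
    ((((continuous_const.mul continuous_id').add continuous_const).pow 2).mul
      (hφc.pow 2)).intervalIntegrable _ _
  set A := ∫ x in (-1:ℝ)..1, φ x ^ 2 with hA_def
  set I1 := ∫ x in (-1:ℝ)..1, deriv φ x ^ 2 with hI1_def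
  set J := ∫ x in (-1:ℝ)..1, ((p:ℝ) * x + (n:ℝ)) ^ 2 * φ x ^ 2 with hJ_def
  have hQ : (∫ x in (-1:ℝ)..1, (deriv φ x ^ 2 + ((p : ℝ) * x + (n : ℝ)) ^ 2 * φ x ^ 2))
      = I1 + J := intervalIntegral.integral_add i1 i3
  have hA : (0:ℝ) ≤ A :=
    intervalIntegral.integral_nonneg (by norm_num) (fun x _ => sq_nonneg _)
  have hI1 : (0:ℝ) ≤ I1 :=
    intervalIntegral.integral_nonneg (by norm_num) (fun x _ => sq_nonneg _)
  have hJnn : (0:ℝ) ≤ J :=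
    intervalIntegral.integral_nonneg (by norm_num)
      (fun x _ => mul_nonneg (sq_nonneg _) (sq_nonneg _))
  -- |p| * A ≤ I1 + J
  have hpos := hdskey φ hφ hb1 hb2 (p:ℝ) (n:ℝ)
  have hneg' := hdskey φ hφ hb1 hb2 (-(p:ℝ)) (-(n:ℝ))
  have hneg : -(p:ℝ) * A ≤ I1 + J := by
    have heq : (∫ x in (-1:ℝ)..1, (-((p:ℝ)) * x + -((n:ℝ))) ^ 2 * φ x ^ 2) = J := by
      rw [hJ_def]
      congr 1
      funext x
      ring
    rw [heq] at hneg'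
    exact hneg'
  have habs : |(p:ℝ)| * A ≤ I1 + J := by
    rcases abs_cases (p:ℝ) with ⟨h, _⟩ | ⟨h, _⟩ <;> rw [h]
    · exact hpos
    · exact hneg
  -- Poincaré-type: (1/4) * A ≤ I1
  have hpoin : (1/4 : ℝ) * A ≤ I1 := by
    have hk := hdskey φ hφ hb1 hb2 (1/2 : ℝ) 0
    have hmono : (∫ x in (-1:ℝ)..1, ((1/2:ℝ) * x + 0) ^ 2 * φ x ^ 2)
        ≤ ∫ x in (-1:ℝ)..1, (1/4 : ℝ) * φ x ^ 2 := by
      apply intervalIntegral.integral_mono_on (by norm_num)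
      · exact ((((continuous_const.mul continuous_id').add continuous_const).pow 2).mul
          (hφc.pow 2)).intervalIntegrable _ _
      · exact (continuous_const.mul (hφc.pow 2)).intervalIntegrable _ _
      · intro x hx
        have h1 : ((1/2:ℝ) * x + 0) ^ 2 ≤ 1/4 := by
          rcases hx with ⟨hl, hr⟩
          nlinarith
        exact mul_le_mul_of_nonneg_right h1 (sq_nonneg _)
    rw [intervalIntegral.integral_const_mul] at hmono
    linarith
  constructor
  · rw [hQ]
    rcases eq_or_ne p 0 with hp | hp
    · subst hp
      simp only [Int.cast_zero, abs_zero, zero_add, mul_one]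
      linarith
    · have hp1 : (1:ℝ) ≤ |(p:ℝ)| := by
        have := Int.one_le_abs hp
        calc (1:ℝ) ≤ |p| := by exact_mod_cast this
        _ = |(p:ℝ)| := by push_cast [Int.cast_abs]; ring
      nlinarith
  · intro hn
    rw [hQ]
    have hmono : (∫ x in (-1:ℝ)..1, (n:ℝ)^2/4 * φ x ^ 2) ≤ J := by
      apply intervalIntegral.integral_mono_on (by norm_num)
      · exact (continuous_const.mul (hφc.pow 2)).intervalIntegrable _ _
      · exact i3
      · intro x hx
        have hxa : |x| ≤ 1 := abs_le.mpr ⟨hx.1, hx.2⟩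
        have h1 : |(n:ℝ)| / 2 ≤ |(p:ℝ) * x + (n:ℝ)| := by
          have h2 : |(n:ℝ)| ≤ |(p:ℝ) * x + (n:ℝ)| + |(p:ℝ) * x| := by
            calc |(n:ℝ)| = |((p:ℝ) * x + (n:ℝ)) - (p:ℝ) * x| := by ring_nf
            _ ≤ _ := abs_sub _ _
          have h3 : |(p:ℝ) * x| ≤ |(p:ℝ)| := by
            rw [abs_mul]
            calc |(p:ℝ)| * |x| ≤ |(p:ℝ)| * 1 := by
                  exact mul_le_mul_of_nonneg_left hxa (abs_nonneg _)
            _ = |(p:ℝ)| := mul_one _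
          linarith
        have h4 : (n:ℝ)^2/4 ≤ ((p:ℝ) * x + (n:ℝ))^2 := by
          have h5 : (|(n:ℝ)|/2)^2 ≤ |(p:ℝ) * x + (n:ℝ)|^2 := by
            apply pow_le_pow_left₀ (by positivity) h1
          rw [sq_abs] at h5
          calc (n:ℝ)^2/4 = (|(n:ℝ)|/2)^2 := by rw [div_pow, sq_abs]; ring
          _ ≤ _ := h5
        exact mul_le_mul_of_nonneg_right h4 (sq_nonneg _)
    rw [intervalIntegral.integral_const_mul] at hmono
    linarith
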